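/- For every integer n ≥ 2, the number of matrices A = (a_{ij}) ∈ Δ_{n+2}^2 with a_{2,2} = 1 equals δ(n,2); explicitly, the map removing the first two rows and first two columns is a bijection from {A ∈ Δ_{n+2}^2 : a_{2,2} = 1} onto Δ_n^2. -/

import Mathlib

/-- The integer encoded (in binary, most significant digit first) by the `i`-th row
of the binary matrix `A`, i.e. `x_i = ∑_j a_{ij} 2^{m-j}` (1-indexed). -/
def rowVal {n m : ℕ} (A : Fin n → Fin m → Fin 2) (i : Fin n) : ℕ :=
  ∑ j : Fin m, (A i j : ℕ) * 2 ^ (m - 1 - (j : ℕ))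

/-- The integer encoded by the `j`-th column of `A`, i.e. `y_j = ∑_i a_{ij} 2^{n-i}`. -/
def colVal {n m : ℕ} (A : Fin n → Fin m → Fin 2) (j : Fin m) : ℕ :=
  ∑ i : Fin n, (A i j : ℕ) * 2 ^ (n - 1 - (i : ℕ))

/-- `A ∈ 𝔠_{n×m}`: rows and columns sorted in lexicographically nondecreasing order. -/
def memC {n m : ℕ} (A : Fin n → Fin m → Fin 2) : Prop :=
  Monotone (rowVal A) ∧ Monotone (colVal A)

/-- `A ∈ 𝔡_{n×m}`: rows and columns sorted in lexicographically nonincreasing order. -/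
def memD {n m : ℕ} (A : Fin n → Fin m → Fin 2) : Prop :=
  Antitone (rowVal A) ∧ Antitone (colVal A)

/-- `Λ_n^k`: n×n binary matrices with exactly `k` ones in each row and each column. -/
def lambdaSet (n k : ℕ) : Set (Fin n → Fin n → Fin 2) :=
  {A | (∀ i, ∑ j, (A i j : ℕ) = k) ∧ (∀ j, ∑ i, (A i j : ℕ) = k)}

/-- `Γ_n^k = 𝔠_{n×n} ∩ Λ_n^k`. -/
def GammaSet (n k : ℕ) : Set (Fin n → Fin n → Fin 2) :=
  {A | memC A} ∩ lambdaSet n k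

/-- `Δ_n^k = 𝔡_{n×n} ∩ Λ_n^k`. -/
def DeltaSet (n k : ℕ) : Set (Fin n → Fin n → Fin 2) :=
  {A | memD A} ∩ lambdaSet n k

/-- `γ(n,k) = |Γ_n^k|`. -/
noncomputable def gammaCard (n k : ℕ) : ℕ := (GammaSet n k).ncard

/-- `δ(n,k) = |Δ_n^k|`. -/
noncomputable def deltaCard (n k : ℕ) : ℕ := (DeltaSet n k).ncard

/-! ### Auxiliary lemmas -/

def valF {m : ℕ} (f : Fin m → Fin 2) : ℕ := ∑ j : Fin m, (f j : ℕ) * 2 ^ (m - 1 - (j : ℕ))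

lemma geo (m : ℕ) : ∑ j : Fin m, 2 ^ (m - 1 - (j : ℕ)) = 2 ^ m - 1 := by
  induction m with
  | zero => simp
  | succ k ih =>
    rw [Fin.sum_univ_succ]
    have h : ∀ j : Fin k, 2 ^ (k + 1 - 1 - ((j.succ : Fin (k+1)) : ℕ)) = 2 ^ (k - 1 - (j : ℕ)) := by
      intro j; congr 1; simp [Fin.val_succ]; omega
    rw [Finset.sum_congr rfl (fun j _ => h j), ih]
    have : 1 ≤ 2 ^ k := Nat.one_le_two_pow
    simp [pow_succ]; omega

lemma valF_le {m : ℕ} (f : Fin m → Fin 2) : valF f ≤ 2 ^ m - 1 := by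
  calc valF f ≤ ∑ j : Fin m, 2 ^ (m - 1 - (j : ℕ)) := by
        apply Finset.sum_le_sum; intro j _
        have : (f j : ℕ) ≤ 1 := by omega
        nlinarith [Nat.one_le_two_pow (n := m - 1 - (j:ℕ))]
    _ = 2 ^ m - 1 := geo m

lemma le_valF_of_one {m : ℕ} (f : Fin m → Fin 2) (j : Fin m) (h : f j = 1) :
    2 ^ (m - 1 - (j : ℕ)) ≤ valF f := by
  have := Finset.single_le_sum (f := fun j : Fin m => (f j : ℕ) * 2 ^ (m - 1 - (j : ℕ)))
    (fun i _ => Nat.zero_le _) (Finset.mem_univ j)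
  simp only [h] at this
  simpa [valF] using this

lemma valF_lt_of_zero0 {k : ℕ} (f : Fin (k+1) → Fin 2) (h : f 0 = 0) :
    valF f < 2 ^ k := by
  rw [valF, Fin.sum_univ_succ, h]
  simp only [Fin.val_zero, Fin.isValue, Fin.val_succ]
  have h1 : ∀ j : Fin k, (f j.succ : ℕ) * 2 ^ (k + 1 - 1 - ((j:ℕ)+1)) ≤ 2 ^ (k - 1 - (j:ℕ)) := by
    intro j
    have : (f j.succ : ℕ) ≤ 1 := by omega
    have he : k + 1 - 1 - ((j:ℕ)+1) = k - 1 - (j:ℕ) := by omega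
    rw [he]; nlinarith [Nat.one_le_two_pow (n := k - 1 - (j:ℕ))]
  calc (0:ℕ) * 2 ^ (k+1-1-0) + ∑ j : Fin k, (f j.succ : ℕ) * 2 ^ (k + 1 - 1 - ((j:ℕ)+1))
      ≤ ∑ j : Fin k, 2 ^ (k - 1 - (j:ℕ)) := by
        simp only [zero_mul, zero_add]; exact Finset.sum_le_sum fun j _ => h1 j
    _ = 2 ^ k - 1 := geo k
    _ < 2 ^ k := by have : 1 ≤ 2 ^ k := Nat.one_le_two_pow; omega

lemma fin2_eq_one {a : Fin 2} (h : a ≠ 0) : a = 1 := by omega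

lemma fin2_eq_zero {a : Fin 2} (h : a ≠ 1) : a = 0 := by omega

lemma exists_one_of_sum_two {m : ℕ} (f : Fin m → Fin 2) (hs : ∑ j, (f j : ℕ) = 2) :
    ∃ j, f j = 1 := by
  have : ∃ j ∈ Finset.univ, (f j : ℕ) ≠ 0 := by
    by_contra h; push_neg at h
    rw [Finset.sum_eq_zero (fun j hj => h j hj)] at hs; omega
  obtain ⟨j, _, hj⟩ := this
  exact ⟨j, by omega⟩

lemma exists_third {m : ℕ} (f : Fin m → Fin 2) (hs : ∑ j, (f j : ℕ) = 2)
    (a b : Fin m) (hab : a ≠ b) (ha : f a = 1) (hb : f b = 0) :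
    ∃ c, f c = 1 ∧ c ≠ a ∧ c ≠ b := by
  by_contra h; push_neg at h
  have h0 : ∀ c, c ≠ a → (f c : ℕ) = 0 := by
    intro c hc
    rcases eq_or_ne c b with rfl | hcb
    · rw [hb]; rfl
    · have h1 : f c ≠ 1 := fun h1 => hcb (h c h1 hc)
      omega
  rw [Finset.sum_eq_single a (fun c _ hc => h0 c hc) (by simp), ha] at hs
  simp at hs

lemma zero_of_sum_two {m : ℕ} (f : Fin m → Fin 2) (hs : ∑ j, (f j : ℕ) = 2)
    (a b : Fin m) (hab : a ≠ b) (ha : f a = 1) (hb : f b = 1)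
    (c : Fin m) (hca : c ≠ a) (hcb : c ≠ b) : f c = 0 := by
  have key : (f c : ℕ) + ((f a : ℕ) + (f b : ℕ)) ≤ ∑ x, (f x : ℕ) :=
    calc (f c : ℕ) + ((f a : ℕ) + (f b : ℕ))
        = ∑ x ∈ ({c, a, b} : Finset (Fin m)), (f x : ℕ) := by
          rw [Finset.sum_insert (by simp [hca, hcb]), Finset.sum_pair hab]
      _ ≤ ∑ x, (f x : ℕ) := Finset.sum_le_sum_of_subset (Finset.subset_univ _)
  rw [hs, ha, hb] at key
  have h1 : ((1 : Fin 2) : ℕ) = 1 := rfl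
  rw [h1] at key
  omega

/-! ### The block matrix -/

def blockA (n : ℕ) (B : Fin n → Fin n → Fin 2) : Fin (n+2) → Fin (n+2) → Fin 2 :=
  fun i j =>
    if _ : (i : ℕ) < 2 then (if (j : ℕ) < 2 then 1 else 0)
    else if _ : (j : ℕ) < 2 then 0
    else B ⟨(i : ℕ) - 2, by have := i.isLt; omega⟩ ⟨(j : ℕ) - 2, by have := j.isLt; omega⟩

lemma colVal_eq_rowVal_transpose {n m : ℕ} (A : Fin n → Fin m → Fin 2) :
    colVal A = rowVal (fun j i => A i j) := rfl

lemma transpose_blockA (n : ℕ) (B : Fin n → Fin n → Fin 2) :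
    (fun i j => blockA n B j i) = blockA n (fun i j => B j i) := by
  funext i j
  simp only [blockA]
  split_ifs <;> rfl

lemma sum_block_top {n : ℕ} (B : Fin n → Fin n → Fin 2) (i : Fin (n+2))
    (h : (i : ℕ) < 2) : ∑ j : Fin (n+2), (blockA n B i j : ℕ) = 2 := by
  rw [Fin.sum_univ_succ, Fin.sum_univ_succ]
  have e0 : blockA n B i 0 = 1 := by simp [blockA, h]
  have e1 : blockA n B i (Fin.succ 0) = 1 := by simp [blockA, h]
  have e2 : ∀ j : Fin n, blockA n B i j.succ.succ = 0 := by
    intro j; simp [blockA, h, Fin.val_succ]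
  rw [e0, e1]
  rw [Finset.sum_congr rfl (fun j _ => by rw [e2 j])]
  simp

lemma sum_block_bot {n : ℕ} (B : Fin n → Fin n → Fin 2) (i : Fin (n+2))
    (h : ¬ (i : ℕ) < 2) :
    ∑ j : Fin (n+2), (blockA n B i j : ℕ) =
      ∑ j : Fin n, (B ⟨(i : ℕ) - 2, by have := i.isLt; omega⟩ j : ℕ) := by
  rw [Fin.sum_univ_succ, Fin.sum_univ_succ]
  have e0 : blockA n B i 0 = 0 := by simp [blockA, h]
  have e1 : blockA n B i (Fin.succ 0) = 0 := by simp [blockA, h]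
  have e2 : ∀ j : Fin n, blockA n B i j.succ.succ
      = B ⟨(i : ℕ) - 2, by have := i.isLt; omega⟩ j := by
    intro j
    simp only [blockA, Fin.val_succ]
    rw [dif_neg h, dif_neg (by omega)]
    congr 1
  rw [e0, e1]
  rw [Finset.sum_congr rfl (fun j _ => by rw [e2 j])]
  simp

lemma rowVal_block_top {n : ℕ} (B : Fin n → Fin n → Fin 2) (i : Fin (n+2))
    (h : (i : ℕ) < 2) : rowVal (blockA n B) i = 2 ^ (n+1) + 2 ^ n := by
  rw [rowVal, Fin.sum_univ_succ, Fin.sum_univ_succ]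
  have e0 : blockA n B i 0 = 1 := by simp [blockA, h]
  have e1 : blockA n B i (Fin.succ 0) = 1 := by simp [blockA, h]
  have e2 : ∀ j : Fin n, blockA n B i j.succ.succ = 0 := by
    intro j; simp [blockA, h, Fin.val_succ]
  rw [e0, e1]
  rw [Finset.sum_congr rfl (fun j _ => by rw [e2 j])]
  simp [Fin.val_succ]

lemma rowVal_block_bot {n : ℕ} (B : Fin n → Fin n → Fin 2) (i : Fin (n+2))
    (h : ¬ (i : ℕ) < 2) :
    rowVal (blockA n B) i = rowVal B ⟨(i : ℕ) - 2, by have := i.isLt; omega⟩ := by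
  rw [rowVal, Fin.sum_univ_succ, Fin.sum_univ_succ]
  have e0 : blockA n B i 0 = 0 := by simp [blockA, h]
  have e1 : blockA n B i (Fin.succ 0) = 0 := by simp [blockA, h]
  have e2 : ∀ j : Fin n, (blockA n B i j.succ.succ : ℕ) * 2 ^ (n + 2 - 1 - ((j.succ.succ : Fin (n+2)) : ℕ))
      = (B ⟨(i : ℕ) - 2, by have := i.isLt; omega⟩ j : ℕ) * 2 ^ (n - 1 - (j : ℕ)) := by
    intro j
    have eb : blockA n B i j.succ.succ = B ⟨(i : ℕ) - 2, by have := i.isLt; omega⟩ j := by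
      simp only [blockA, Fin.val_succ]
      rw [dif_neg h, dif_neg (by omega)]
      congr 1
    rw [eb]
    congr 1
    simp [Fin.val_succ]
    omega
  rw [e0, e1]
  rw [Finset.sum_congr rfl (fun j _ => e2 j)]
  simp [rowVal]

lemma antitone_rowVal_block {n : ℕ} (B : Fin n → Fin n → Fin 2)
    (hB : Antitone (rowVal B)) : Antitone (rowVal (blockA n B)) := by
  intro i j hij
  by_cases hj : (j : ℕ) < 2
  · have hi : (i : ℕ) < 2 := lt_of_le_of_lt hij hj
    rw [rowVal_block_top _ _ hj, rowVal_block_top _ _ hi]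
  · rw [rowVal_block_bot _ _ hj]
    have hle : rowVal B ⟨(j : ℕ) - 2, by have := j.isLt; omega⟩ ≤ 2 ^ n - 1 := valF_le _
    by_cases hi : (i : ℕ) < 2
    · rw [rowVal_block_top _ _ hi]
      have h2 : 1 ≤ 2 ^ n := Nat.one_le_two_pow
      omega
    · rw [rowVal_block_bot _ _ hi]
      exact hB (by simp only [Fin.mk_le_mk]; have := Fin.le_def.mp hij; omega)

lemma transpose_mem_delta {n k : ℕ} (A : Fin n → Fin n → Fin 2)
    (hA : A ∈ DeltaSet n k) : (fun i j => A j i) ∈ DeltaSet n k := by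
  obtain ⟨⟨hr, hc⟩, hs1, hs2⟩ := hA
  refine ⟨⟨?_, ?_⟩, fun i => hs2 i, fun j => hs1 j⟩
  · rw [show rowVal (fun i j => A j i) = colVal A from rfl]; exact hc
  · rw [show colVal (fun i j => A j i) = rowVal A from rfl]; exact hr

lemma block_mem {n : ℕ} (B : Fin n → Fin n → Fin 2) (hB : B ∈ DeltaSet n 2) :
    blockA n B ∈ DeltaSet (n+2) 2 := by
  obtain ⟨⟨hr, hc⟩, hs1, hs2⟩ := hB
  refine ⟨⟨antitone_rowVal_block B hr, ?_⟩, ?_, ?_⟩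
  · rw [colVal_eq_rowVal_transpose, transpose_blockA]
    exact antitone_rowVal_block _ hc
  · intro i
    by_cases hi : (i : ℕ) < 2
    · exact sum_block_top B i hi
    · rw [sum_block_bot B i hi]; exact hs1 _
  · intro j
    have e : ∀ i, blockA n B i j = blockA n (fun a b => B b a) j i := by
      intro i; rw [← transpose_blockA]
    rw [Finset.sum_congr rfl (fun i _ => by rw [e i])]
    by_cases hj : (j : ℕ) < 2
    · exact sum_block_top _ j hj
    · rw [sum_block_bot _ j hj]; exact hs2 _

lemma block_mem_rev {n : ℕ} (B : Fin n → Fin n → Fin 2)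
    (hA : blockA n B ∈ DeltaSet (n+2) 2) : B ∈ DeltaSet n 2 := by
  have key : ∀ C : Fin n → Fin n → Fin 2, blockA n C ∈ DeltaSet (n+2) 2 →
      Antitone (rowVal C) ∧ ∀ i, ∑ j, (C i j : ℕ) = 2 := by
    intro C hC
    obtain ⟨⟨hr, _⟩, hs1, _⟩ := hC
    constructor
    · intro i j hij
      have h2i : ¬ ((⟨(i:ℕ)+2, Nat.add_lt_add_right i.isLt 2⟩ : Fin (n+2)) : ℕ) < 2 := by simp
      have h2j : ¬ ((⟨(j:ℕ)+2, Nat.add_lt_add_right j.isLt 2⟩ : Fin (n+2)) : ℕ) < 2 := by simp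
      have e1 := rowVal_block_bot C _ h2i
      have e2 := rowVal_block_bot C _ h2j
      have mi : (⟨((⟨(i:ℕ)+2, Nat.add_lt_add_right i.isLt 2⟩ : Fin (n+2)) : ℕ) - 2, by have := i.isLt; omega⟩ : Fin n) = i := by ext; simp
      have mj : (⟨((⟨(j:ℕ)+2, Nat.add_lt_add_right j.isLt 2⟩ : Fin (n+2)) : ℕ) - 2, by have := j.isLt; omega⟩ : Fin n) = j := by ext; simp
      rw [mi] at e1; rw [mj] at e2
      rw [← e1, ← e2]
      exact hr (by simp only [Fin.mk_le_mk]; have := Fin.le_def.mp hij; omega)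
    · intro i
      have h2i : ¬ ((⟨(i:ℕ)+2, Nat.add_lt_add_right i.isLt 2⟩ : Fin (n+2)) : ℕ) < 2 := by simp
      have e1 := sum_block_bot C _ h2i
      have mi : (⟨((⟨(i:ℕ)+2, Nat.add_lt_add_right i.isLt 2⟩ : Fin (n+2)) : ℕ) - 2, by have := i.isLt; omega⟩ : Fin n) = i := by ext; simp
      rw [mi] at e1
      rw [← e1]
      exact hs1 _
  have h1 := key B hA
  have hT : blockA n (fun i j => B j i) ∈ DeltaSet (n+2) 2 := by
    rw [← transpose_blockA]
    exact transpose_mem_delta _ hA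
  have h2 := key _ hT
  exact ⟨⟨h1.1, h2.1⟩, h1.2, h2.2⟩

lemma res_block {n : ℕ} (B : Fin n → Fin n → Fin 2) :
    (fun (i j : Fin n) => blockA n B ⟨(i : ℕ) + 2, Nat.add_lt_add_right i.isLt 2⟩
      ⟨(j : ℕ) + 2, Nat.add_lt_add_right j.isLt 2⟩) = B := by
  funext i j
  simp only [blockA]
  rw [dif_neg (by simp), dif_neg (by simp)]
  congr 1

lemma structure_lemma {n : ℕ} (A : Fin (n+2) → Fin (n+2) → Fin 2)
    (hA : A ∈ DeltaSet (n+2) 2) (h11 : A ⟨1, Nat.one_lt_succ_succ n⟩ ⟨1, Nat.one_lt_succ_succ n⟩ = 1) :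
    A = blockA n (fun (i j : Fin n) => A ⟨(i : ℕ) + 2, Nat.add_lt_add_right i.isLt 2⟩
      ⟨(j : ℕ) + 2, Nat.add_lt_add_right j.isLt 2⟩) := by
  obtain ⟨⟨hr, hc⟩, hs1, hs2⟩ := hA
  have hone : (⟨1, Nat.one_lt_succ_succ n⟩ : Fin (n+2)) = 1 := by ext; simp [Fin.val_one]
  rw [hone] at h11
  -- A 0 0 = 1
  have h00 : A 0 0 = 1 := by
    by_contra h
    have h0 : A 0 0 = 0 := fin2_eq_zero h
    obtain ⟨i, hi⟩ := exists_one_of_sum_two (fun i => A i 0) (hs2 0)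
    have hge : 2 ^ (n + 1) ≤ valF (A i) := by
      simpa using le_valF_of_one (A i) 0 hi
    have hlt : valF (A 0) < 2 ^ (n + 1) := valF_lt_of_zero0 (A 0) h0
    have hmono := hr (Fin.zero_le i)
    have : rowVal A i = valF (A i) := rfl
    have : rowVal A 0 = valF (A 0) := rfl
    have hh : valF (A i) ≤ valF (A 0) := hmono
    omega
  -- A 0 1 = 1
  have h01 : A 0 1 = 1 := by
    by_contra h
    have h0 : A 0 1 = 0 := fin2_eq_zero h
    obtain ⟨c, hc1, hcne0, hcne1⟩ := exists_third (A 0) (hs1 0) 0 1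
      (by simp [Fin.ext_iff, Fin.val_one]) h00 h0
    have hge : 2 ^ (n + 1) ≤ valF (fun i => A i c) := by
      simpa using le_valF_of_one (fun i => A i c) 0 hc1
    have hlt : valF (fun i => A i 1) < 2 ^ (n + 1) := valF_lt_of_zero0 (fun i => A i 1) h0
    have hle : (1 : Fin (n+2)) ≤ c := by
      rw [Fin.le_def]
      have e0 : (c : ℕ) ≠ 0 := fun e => hcne0 (by ext; simp [e])
      have e1 : (c : ℕ) ≠ 1 := fun e => hcne1 (by ext; simp [e, Fin.val_one])
      simp [Fin.val_one]; omega
    have hmono := hc hle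
    have hh : valF (fun i => A i c) ≤ valF (fun i => A i 1) := hmono
    omega
  -- A 1 0 = 1
  have h10 : A 1 0 = 1 := by
    by_contra h
    have h0 : A 1 0 = 0 := fin2_eq_zero h
    obtain ⟨c, hc1, hcne0, hcne1⟩ := exists_third (fun i => A i 0) (hs2 0) 0 1
      (by simp [Fin.ext_iff, Fin.val_one]) h00 h0
    have hge : 2 ^ (n + 1) ≤ valF (A c) := by
      simpa using le_valF_of_one (A c) 0 hc1
    have hlt : valF (A 1) < 2 ^ (n + 1) := valF_lt_of_zero0 (A 1) h0
    have hle : (1 : Fin (n+2)) ≤ c := by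
      rw [Fin.le_def]
      have e0 : (c : ℕ) ≠ 0 := fun e => hcne0 (by ext; simp [e])
      have e1 : (c : ℕ) ≠ 1 := fun e => hcne1 (by ext; simp [e, Fin.val_one])
      simp [Fin.val_one]; omega
    have hmono := hr hle
    have hh : valF (A c) ≤ valF (A 1) := hmono
    omega
  have hne01 : (0 : Fin (n+2)) ≠ 1 := by simp [Fin.ext_iff, Fin.val_one]
  have hrow0 : ∀ j : Fin (n+2), j ≠ 0 → j ≠ 1 → A 0 j = 0 :=
    fun j hj0 hj1 => zero_of_sum_two (A 0) (hs1 0) 0 1 hne01 h00 h01 j hj0 hj1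
  have hrow1 : ∀ j : Fin (n+2), j ≠ 0 → j ≠ 1 → A 1 j = 0 :=
    fun j hj0 hj1 => zero_of_sum_two (A 1) (hs1 1) 0 1 hne01 h10 h11 j hj0 hj1
  have hcol0 : ∀ i : Fin (n+2), i ≠ 0 → i ≠ 1 → A i 0 = 0 :=
    fun i hi0 hi1 => zero_of_sum_two (fun i => A i 0) (hs2 0) 0 1 hne01 h00 h10 i hi0 hi1
  have hcol1 : ∀ i : Fin (n+2), i ≠ 0 → i ≠ 1 → A i 1 = 0 :=
    fun i hi0 hi1 => zero_of_sum_two (fun i => A i 1) (hs2 1) 0 1 hne01 h01 h11 i hi0 hi1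
  funext i j
  simp only [blockA]
  by_cases hi : (i : ℕ) < 2
  · rw [dif_pos hi]
    have hcases : i = 0 ∨ i = 1 := by
      rcases (by omega : (i : ℕ) = 0 ∨ (i : ℕ) = 1) with h | h
      · left; ext; simp [h]
      · right; ext; simp [h, Fin.val_one]
    by_cases hj : (j : ℕ) < 2
    · rw [if_pos hj]
      have hjcases : j = 0 ∨ j = 1 := by
        rcases (by omega : (j : ℕ) = 0 ∨ (j : ℕ) = 1) with h | h
        · left; ext; simp [h]
        · right; ext; simp [h, Fin.val_one]
      rcases hcases with rfl | rfl <;> rcases hjcases with rfl | rfl <;> assumption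
    · rw [if_neg hj]
      have hj0 : j ≠ 0 := fun e => by rw [e] at hj; simp at hj
      have hj1 : j ≠ 1 := fun e => by rw [e] at hj; simp [Fin.val_one] at hj
      rcases hcases with rfl | rfl
      · exact hrow0 j hj0 hj1
      · exact hrow1 j hj0 hj1
  · rw [dif_neg hi]
    by_cases hj : (j : ℕ) < 2
    · rw [dif_pos hj]
      have hi0 : i ≠ 0 := fun e => by rw [e] at hi; simp at hi
      have hi1 : i ≠ 1 := fun e => by rw [e] at hi; simp [Fin.val_one] at hi
      have hjcases : j = 0 ∨ j = 1 := by
        rcases (by omega : (j : ℕ) = 0 ∨ (j : ℕ) = 1) with h | h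
        · left; ext; simp [h]
        · right; ext; simp [h, Fin.val_one]
      rcases hjcases with rfl | rfl
      · exact hcol0 i hi0 hi1
      · exact hcol1 i hi0 hi1
    · rw [dif_neg hj]
      congr 1
      all_goals (ext; simp; omega)

/-- Theorem (0-indexed): deleting the first two rows and columns is a bijection from
`{A ∈ Δ_{n+2}^2 | a_{11} = 1}` onto `Δ_n^2`; in particular that set has cardinality `δ(n,2)`. -/
theorem delta_two_case_one (n : ℕ) (hn : 2 ≤ n) :
    Set.BijOn
      (fun (A : Fin (n + 2) → Fin (n + 2) → Fin 2) (i j : Fin n) =>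
        A ⟨(i : ℕ) + 2, by have := i.isLt; omega⟩ ⟨(j : ℕ) + 2, by have := j.isLt; omega⟩)
      {A ∈ DeltaSet (n + 2) 2 | A ⟨1, by omega⟩ ⟨1, by omega⟩ = 1}
      (DeltaSet n 2) ∧
    {A ∈ DeltaSet (n + 2) 2 | A ⟨1, by omega⟩ ⟨1, by omega⟩ = 1}.ncard = deltaCard n 2 := by
  set f := fun (A : Fin (n + 2) → Fin (n + 2) → Fin 2) (i j : Fin n) =>
        A ⟨(i : ℕ) + 2, by have := i.isLt; omega⟩ ⟨(j : ℕ) + 2, by have := j.isLt; omega⟩ with hf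
  set S := {A ∈ DeltaSet (n + 2) 2 | A ⟨1, by omega⟩ ⟨1, by omega⟩ = 1} with hS
  have hbij : Set.BijOn f S (DeltaSet n 2) := by
    refine ⟨?_, ?_, ?_⟩
    · intro A hA
      have hst := structure_lemma A hA.1 hA.2
      have : blockA n (f A) ∈ DeltaSet (n+2) 2 := by rw [← hst]; exact hA.1
      exact block_mem_rev _ this
    · intro A1 h1 A2 h2 he
      have e1 := structure_lemma A1 h1.1 h1.2
      have e2 := structure_lemma A2 h2.1 h2.2
      rw [e1, e2]
      exact congrArg _ he
    · intro B hB
      refine ⟨blockA n B, ⟨block_mem B hB, ?_⟩, ?_⟩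
      · show blockA n B ⟨1, by omega⟩ ⟨1, by omega⟩ = 1
        simp [blockA]
      · exact res_block B
  refine ⟨hbij, ?_⟩
  rw [show deltaCard n 2 = (DeltaSet n 2).ncard from rfl, ← hbij.image_eq,
    Set.ncard_image_of_injOn hbij.injOn]
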